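/- For every θ > 0 and every p ∈ (0,1), there exists a unique x > 0 such that G(x;θ) = p, where G(x;θ) = 1 − (1 + θx/(θ+3))·e^{-θx}; moreover this unique x satisfies the Lambert-type equation (3+θ+θx)·e^{-(3+θ+θx)} = (1−p)(θ+3)·e^{-(θ+3)}. -/

import Mathlib

/-- Quantile function of the i-Garima distribution: for p ∈ (0,1) there is a
unique x > 0 with G(x;θ) = p, and this x satisfies the Lambert-type equation
(3+θ+θx)·e^{-(3+θ+θx)} = (1−p)(θ+3)·e^{-(θ+3)}. -/
theorem iGarima_quantile (θ : ℝ) (hθ : 0 < θ) (p : ℝ) (hp : p ∈ Set.Ioo (0 : ℝ) 1) :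
    (∃! x : ℝ, 0 < x ∧ 1 - (1 + θ * x / (θ + 3)) * Real.exp (-θ * x) = p)
      ∧ ∀ x : ℝ, 0 < x → 1 - (1 + θ * x / (θ + 3)) * Real.exp (-θ * x) = p →
          (3 + θ + θ * x) * Real.exp (-(3 + θ + θ * x))
            = (1 - p) * (θ + 3) * Real.exp (-(θ + 3)) := by
  obtain ⟨hp0, hp1⟩ := hp
  have hθ3 : (0:ℝ) < θ + 3 := by linarith
  have hq0 : (0:ℝ) < 1 - p := by linarith
  set f : ℝ → ℝ := fun x => (1 + θ * x / (θ + 3)) * Real.exp (-θ * x) with hf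
  -- derivative of f
  have hderiv : ∀ x : ℝ,
      HasDerivAt f (-(θ * Real.exp (-θ * x) * (θ + 2 + θ * x) / (θ + 3))) x := by
    intro x
    have h1 : HasDerivAt (fun x : ℝ => 1 + θ * x / (θ + 3)) (θ / (θ + 3)) x := by
      have := ((hasDerivAt_id x).const_mul θ).div_const (θ + 3)
      simpa using (this.const_add 1)
    have h2 : HasDerivAt (fun x : ℝ => Real.exp (-θ * x)) (-θ * Real.exp (-θ * x)) x := by
      have := (Real.hasDerivAt_exp (-θ * x)).comp x ((hasDerivAt_id x).const_mul (-θ))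
      have h := this
      simp only [Function.comp_def] at h
      simpa [mul_comm] using h
    have : HasDerivAt f (θ / (θ + 3) * Real.exp (-θ * x) + (1 + θ * x / (θ + 3)) * (-θ * Real.exp (-θ * x))) x := h1.mul h2
    convert this using 1
    field_simp [hθ3.ne']
    ring
  have hcont : Continuous f := by
    apply Continuous.mul
    · continuity
    · continuity
  -- f is strictly decreasing on [0, ∞)
  have hanti : StrictAntiOn f (Set.Ici 0) := by
    apply strictAntiOn_of_deriv_neg (convex_Ici 0) hcont.continuousOn
    intro x hx
    rw [interior_Ici] at hx
    rw [(hderiv x).deriv]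
    have hx0 : (0:ℝ) < x := hx
    have : 0 < θ * Real.exp (-θ * x) * (θ + 2 + θ * x) / (θ + 3) := by
      apply div_pos
      · apply mul_pos (mul_pos hθ (Real.exp_pos _))
        nlinarith
      · exact hθ3
    linarith
  have hf0 : f 0 = 1 := by simp [hf]
  -- upper bound: f x ≤ exp(-(θ*(θ+2)/(θ+3)) * x) for x ≥ 0
  set c : ℝ := θ * (θ + 2) / (θ + 3) with hc
  have hc0 : 0 < c := by
    apply div_pos (by nlinarith) hθ3
  have hbound : ∀ x : ℝ, f x ≤ Real.exp (-(c * x)) := by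
    intro x
    have h1 : 1 + θ * x / (θ + 3) ≤ Real.exp (θ * x / (θ + 3)) := by
      have := Real.add_one_le_exp (θ * x / (θ + 3))
      linarith
    have h2 : f x ≤ Real.exp (θ * x / (θ + 3)) * Real.exp (-θ * x) :=
      mul_le_mul_of_nonneg_right h1 (Real.exp_pos _).le
    calc f x ≤ Real.exp (θ * x / (θ + 3)) * Real.exp (-θ * x) := h2
      _ = Real.exp (-(c * x)) := by
          rw [← Real.exp_add]
          congr 1
          rw [hc]; field_simp [hθ3.ne']
          ring
  -- choose b large
  set b : ℝ := max 1 ((-Real.log (1 - p)) / c + 1) with hb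
  have hb1 : (1:ℝ) ≤ b := le_max_left _ _
  have hb0 : (0:ℝ) < b := by linarith
  have hfb : f b < 1 - p := by
    have hcb : -Real.log (1 - p) < c * b := by
      have h1 : (-Real.log (1 - p)) / c + 1 ≤ b := le_max_right _ _
      have : (-Real.log (1 - p)) / c * c ≤ (b - 1) * c :=
        mul_le_mul_of_nonneg_right (by linarith) hc0.le
      rw [div_mul_cancel₀ _ hc0.ne'] at this
      nlinarith
    calc f b ≤ Real.exp (-(c * b)) := hbound b
      _ < Real.exp (Real.log (1 - p)) := by
          apply Real.exp_lt_exp.mpr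
          linarith
      _ = 1 - p := Real.exp_log hq0
  -- existence via IVT
  have hmem : (1 - p) ∈ Set.Ioo (f b) (f 0) := by
    rw [hf0]; exact ⟨hfb, by linarith⟩
  obtain ⟨x, hx, hfx⟩ := intermediate_value_Ioo' hb0.le hcont.continuousOn hmem
  have hx0 : 0 < x := hx.1
  constructor
  · refine ⟨x, ⟨hx0, by rw [show (1 + θ * x / (θ + 3)) * Real.exp (-θ * x) = f x from rfl, hfx]; ring⟩, ?_⟩
    intro y ⟨hy0, hy⟩
    have hfy : f y = 1 - p := by
      have : (1 + θ * y / (θ + 3)) * Real.exp (-θ * y) = f y := rfl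
      linarith [hy, this ▸ hy]
    have : f y = f x := by rw [hfy, hfx]
    exact hanti.injOn hy0.le hx0.le this
  · intro z hz0 hz
    have hfz : f z = 1 - p := by
      have : (1 + θ * z / (θ + 3)) * Real.exp (-θ * z) = f z := rfl
      linarith [this ▸ hz]
    have key : (1 + θ * z / (θ + 3)) * Real.exp (-θ * z) = 1 - p := hfz
    have h3 : (3 + θ + θ * z) = (θ + 3) * (1 + θ * z / (θ + 3)) := by
      field_simp
      ring
    have hexp : Real.exp (-(3 + θ + θ * z)) = Real.exp (-(θ + 3)) * Real.exp (-θ * z) := by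
      rw [← Real.exp_add]; ring_nf
    rw [hexp, h3]
    calc (θ + 3) * (1 + θ * z / (θ + 3)) * (Real.exp (-(θ + 3)) * Real.exp (-θ * z))
        = (θ + 3) * ((1 + θ * z / (θ + 3)) * Real.exp (-θ * z)) * Real.exp (-(θ + 3)) := by ring
      _ = (1 - p) * (θ + 3) * Real.exp (-(θ + 3)) := by rw [key]; ring
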